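/- Fix reals λ2 > 0, γ > 0 and suppose λ1 > 1. Then the point ū = ( γ/(λ1(γ+λ1−1)), (λ1−1)/λ1, 0, (λ1−1)/(λ1(γ+λ1−1)) ) belongs to Ω, satisfies F(ū) = 0, and moreover ū is the unique point u ∈ Ω with F(u) = 0, u2 = 0 and u ≠ (1,0,0,0). -/

import Mathlib

/-- The mean-field vector field of the multitype contact process with frozen
states, with coordinates `u = (u 0, u 1, u 2, u 3)`. -/
def meanField (l1 l2 g : ℝ) (u : Fin 4 → ℝ) : Fin 4 → ℝ :=
  ![u 2 + g * u 3 - l1 * u 0 * u 1 - l2 * u 0 * u 2,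
    l1 * u 0 * u 1 + l1 * u 1 * u 3 - u 1,
    l2 * u 0 * u 2 - u 2,
    u 1 - l1 * u 1 * u 3 - g * u 3]

/-- The simplex `Ω` of admissible densities. -/
def Omega : Set (Fin 4 → ℝ) :=
  {u | (∀ i, 0 ≤ u i) ∧ u 0 + u 1 + u 2 + u 3 = 1}

theorem boundary_fixed_point_unique (l1 l2 g : ℝ)
    (hl1 : 1 < l1) (hl2 : 0 < l2) (hg : 0 < g) :
    let ubar : Fin 4 → ℝ :=
      ![g / (l1 * (g + l1 - 1)), (l1 - 1) / l1, 0,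
        (l1 - 1) / (l1 * (g + l1 - 1))]
    ubar ∈ Omega ∧ meanField l1 l2 g ubar = 0 ∧
      ∀ u ∈ Omega, meanField l1 l2 g u = 0 → u 2 = 0 →
        u ≠ ![1, 0, 0, 0] → u = ubar := by
  intro ubar
  have hl1pos : (0:ℝ) < l1 := lt_trans one_pos hl1
  have hl1ne : l1 ≠ 0 := ne_of_gt hl1pos
  have hDpos : (0:ℝ) < g + l1 - 1 := by linarith
  have hDne : g + l1 - 1 ≠ 0 := ne_of_gt hDpos
  refine ⟨⟨?_, ?_⟩, ?_, ?_⟩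
  · intro i
    have hl1' : (0:ℝ) ≤ l1 - 1 := by linarith
    fin_cases i <;> simp [ubar] <;>
      first
        | positivity
        | exact div_nonneg hl1' (by positivity)
  · show ubar 0 + ubar 1 + ubar 2 + ubar 3 = 1
    simp only [ubar, Matrix.cons_val_zero, Matrix.cons_val_one, Matrix.head_cons,
      Matrix.cons_val_two, Matrix.tail_cons, Matrix.cons_val_three]
    field_simp
    ring
  · funext i
    fin_cases i <;>
      simp [meanField, ubar] <;> field_simp <;> ring
  · intro u hu hF h2 hne
    have e1 := congrFun hF 1
    have e3 := congrFun hF 3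
    simp only [meanField, Matrix.cons_val_one, Matrix.head_cons,
      Matrix.cons_val_three, Matrix.tail_cons, Pi.zero_apply, Matrix.cons_val_zero] at e1 e3
    obtain ⟨hnn, hsum⟩ := hu
    rw [h2] at hsum
    by_cases h1 : u 1 = 0
    · exfalso
      apply hne
      have h3 : u 3 = 0 := by
        rw [h1] at e3
        have : g * u 3 = 0 := by linarith
        exact (mul_eq_zero.mp this).resolve_left (ne_of_gt hg)
      have h0 : u 0 = 1 := by rw [h1, h3] at hsum; linarith
      funext i
      fin_cases i <;> simp [h0, h1, h2, h3]
    · -- u 1 ≠ 0, so l1 * (u 0 + u 3) = 1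
      have key : l1 * (u 0 + u 3) = 1 := by
        have : u 1 * (l1 * (u 0 + u 3) - 1) = 0 := by ring_nf; ring_nf at e1; linarith
        have := (mul_eq_zero.mp this).resolve_left h1
        linarith
      have h1v : u 1 = (l1 - 1) / l1 := by
        have : u 0 + u 3 = 1 / l1 := by
          field_simp at key ⊢; linarith
        field_simp
        linear_combination l1 * hsum - key
      have h3v : u 3 = (l1 - 1) / (l1 * (g + l1 - 1)) := by
        -- from e3 : u 1 - l1 * u 1 * u 3 - g * u 3 = 0, with u 1 = (l1-1)/l1
        rw [h1v] at e3
        have hden : l1 * ((l1 - 1) / l1) + g ≠ 0 := by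
          rw [mul_div_cancel₀ _ hl1ne]; linarith
        have : u 3 * (l1 * ((l1 - 1) / l1) + g) = (l1 - 1) / l1 := by ring_nf; ring_nf at e3; linarith
        rw [mul_div_cancel₀ _ hl1ne] at this
        field_simp at this ⊢
        linarith
      have h0v : u 0 = g / (l1 * (g + l1 - 1)) := by
        have h0 : u 0 = 1 - u 1 - u 3 := by linarith
        rw [h0, h1v, h3v]
        field_simp
        ring
      funext i
      fin_cases i <;> simp [ubar, h0v, h1v, h2, h3v]
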